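/- Let G and G' be finite simple graphs, each containing at least one edge, and suppose Z(G') = Z*(G'). Then Z(G □ G') ≥ Z(G) · Z(G') + 1. -/

import Mathlib

open Finset

/-- A fort of a graph: a nonempty (finite) set of vertices `F` such that no vertex
outside `F` has exactly one neighbor in `F`. -/
def IsFort {V : Type*} (G : SimpleGraph V) (F : Finset V) : Prop :=
  F.Nonempty ∧ ∀ v ∉ F, ¬ ∃! u, u ∈ F ∧ G.Adj v u

/-- The fort number: the maximum cardinality of a collection of pairwise disjoint forts. -/
noncomputable def fortNumber {V : Type*} (G : SimpleGraph V) : ℕ :=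
  sSup {k | ∃ 𝒞 : Finset (Finset V), (∀ F ∈ 𝒞, IsFort G F) ∧
    (↑𝒞 : Set (Finset V)).Pairwise Disjoint ∧ 𝒞.card = k}

/-- The fractional zero forcing number. -/
noncomputable def fracZ {V : Type*} [Fintype V] (G : SimpleGraph V) : ℝ :=
  sInf {x : ℝ | ∃ ω : V → ℝ, (∀ v, 0 ≤ ω v) ∧
    (∀ F : Finset V, IsFort G F → 1 ≤ ∑ v ∈ F, ω v) ∧ x = ∑ v, ω v}

/-- The set of vertices eventually filled by the zero forcing process started at `S`. -/
inductive ZFForced {V : Type*} (G : SimpleGraph V) (S : Set V) : V → Prop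
  | init (v : V) : v ∈ S → ZFForced G S v
  | force (u w : V) : G.Adj u w → ZFForced G S u →
      (∀ x, G.Adj u x → x ≠ w → ZFForced G S x) → ZFForced G S w

/-- A zero forcing set: starting from `S`, every vertex is eventually filled. -/
def IsZeroForcingSet {V : Type*} (G : SimpleGraph V) (S : Set V) : Prop :=
  ∀ v, ZFForced G S v

/-- The zero forcing number: minimum cardinality of a zero forcing set. -/
noncomputable def zfNumber {V : Type*} (G : SimpleGraph V) : ℕ :=
  sInf {k | ∃ S : Finset V, IsZeroForcingSet G ↑S ∧ S.card = k}

section Basic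
variable {V : Type*} {G : SimpleGraph V}

lemma zfforced_not_mem_fort {S : Set V} {F : Finset V} (hF : IsFort G F)
    (hdisj : ∀ s ∈ S, s ∉ F) : ∀ v, ZFForced G S v → v ∉ F := by
  intro v hv
  induction hv with
  | init v h => exact hdisj v h
  | force u w hadj hu hall ihu ihall =>
      intro hwF
      have hcond := hF.2 u ihu
      have hex : ∃ x, (x ∈ F ∧ G.Adj u x) ∧ x ≠ w := by
        by_contra hno
        push_neg at hno
        exact hcond ⟨w, ⟨hwF, hadj⟩, fun y hy => hno y hy⟩
      obtain ⟨x, ⟨hxF, hxadj⟩, hxw⟩ := hex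
      exact ihall x hxadj hxw hxF

lemma not_zfs_exists_fort [Fintype V] {S : Set V} (h : ¬ IsZeroForcingSet G S) :
    ∃ F : Finset V, IsFort G F ∧ ∀ s ∈ S, s ∉ F := by
  classical
  refine ⟨univ.filter (fun v => ¬ ZFForced G S v), ⟨?_, ?_⟩, ?_⟩
  · simp only [IsZeroForcingSet, not_forall] at h
    obtain ⟨v, hv⟩ := h
    exact ⟨v, by simp [hv]⟩
  · intro v hv
    simp only [mem_filter, mem_univ, true_and, not_not] at hv
    rintro ⟨u, ⟨huF, hadj⟩, huniq⟩
    simp only [mem_filter, mem_univ, true_and] at huF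
    refine huF (ZFForced.force v u hadj hv ?_)
    intro x hx hxu
    by_contra hxn
    exact hxu (huniq x ⟨by simp [hxn], hx⟩)
  · intro s hs
    simp [ZFForced.init s hs]

lemma zfs_of_transversal [Fintype V] {S : Set V}
    (h : ∀ F : Finset V, IsFort G F → ∃ s ∈ F, s ∈ S) : IsZeroForcingSet G S := by
  by_contra h'
  obtain ⟨F, hF, hdisj⟩ := not_zfs_exists_fort h'
  obtain ⟨s, hsF, hsS⟩ := h F hF
  exact hdisj s hsS hsF

lemma zfs_univ [Fintype V] : IsZeroForcingSet G (↑(univ : Finset V)) :=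
  fun v => ZFForced.init v (by simp)

lemma zfNumber_le_card [Fintype V] {S : Finset V} (h : IsZeroForcingSet G ↑S) :
    zfNumber G ≤ S.card := Nat.sInf_le ⟨S, h, rfl⟩

lemma exists_min_zfs [Fintype V] :
    ∃ S : Finset V, IsZeroForcingSet G ↑S ∧ S.card = zfNumber G := by
  have hne : {k | ∃ S : Finset V, IsZeroForcingSet G ↑S ∧ S.card = k}.Nonempty :=
    ⟨(univ : Finset V).card, univ, zfs_univ, rfl⟩
  exact Nat.sInf_mem hne

lemma zfforced_empty {v : V} (h : ZFForced G ∅ v) : False := by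
  induction h with
  | init v h => exact h
  | force u w hadj hu hall ihu ihall => exact ihu

lemma one_le_zfNumber [Fintype V] [Nonempty V] : 1 ≤ zfNumber G := by
  obtain ⟨S, hS, hcard⟩ := exists_min_zfs (G := G)
  rcases Nat.eq_zero_or_pos (zfNumber G) with h0 | h1
  · exfalso
    rw [h0, Finset.card_eq_zero] at hcard
    subst hcard
    have := hS (Classical.arbitrary V)
    rw [Finset.coe_empty] at this
    exact zfforced_empty this
  · exact h1

end Basic

section Forts
variable {V V' : Type*} {G : SimpleGraph V} {H : SimpleGraph V'}

lemma zfs_meets_fort [Fintype V] {S : Set V} (hS : IsZeroForcingSet G S)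
    {F : Finset V} (hF : IsFort G F) : ∃ s ∈ F, s ∈ S := by
  by_contra hno
  push_neg at hno
  obtain ⟨v, hv⟩ := hF.1
  exact zfforced_not_mem_fort hF (fun s hs => by
    by_contra hsF
    exact hno s hsF hs) v (hS v) hv

lemma isFort_univ [Fintype V] [Nonempty V] : IsFort G (univ : Finset V) :=
  ⟨univ_nonempty, fun v hv => absurd (mem_univ v) hv⟩

lemma isFort_boxProd {Φ : Finset V} {F : Finset V'} (hΦ : IsFort G Φ) (hF : IsFort H F) :
    IsFort (G □ H) (Φ ×ˢ F) := by
  obtain ⟨⟨a, ha⟩, hΦc⟩ := hΦ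
  obtain ⟨⟨b, hb⟩, hFc⟩ := hF
  refine ⟨⟨(a, b), by simp [ha, hb]⟩, ?_⟩
  rintro ⟨v, x⟩ hvx hex
  rw [Finset.mem_product] at hvx
  push_neg at hvx
  obtain ⟨⟨u1, u2⟩, ⟨humem, huadj⟩, huniq⟩ := hex
  rw [Finset.mem_product] at humem
  rw [SimpleGraph.boxProd_adj] at huadj
  by_cases hvΦ : v ∈ Φ
  · -- then x ∉ F; witness must be vertical
    have hxF : x ∉ F := hvx hvΦ
    have hvert : u1 = v ∧ H.Adj x u2 := by
      rcases huadj with ⟨hG, he⟩ | ⟨hH, he⟩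
      · have he' : x = u2 := he
        exact absurd (by rw [he']; exact humem.2 : x ∈ F) hxF
      · have he' : v = u1 := he
        exact ⟨he'.symm, hH⟩
    refine hFc x hxF ⟨u2, ⟨humem.2, hvert.2⟩, ?_⟩
    rintro y ⟨hyF, hyadj⟩
    have := huniq (v, y) ⟨Finset.mem_product.mpr ⟨hvΦ, hyF⟩, by
      rw [SimpleGraph.boxProd_adj]; exact Or.inr ⟨hyadj, rfl⟩⟩
    have h2 : y = u2 := congrArg Prod.snd this
    exact h2
  · rcases huadj with ⟨hG, he⟩ | ⟨hH, he⟩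
    · -- horizontal witness : x = u2 ∈ F, so v ∉ Φ, fort in G at v
      refine hΦc v hvΦ ⟨u1, ⟨humem.1, hG⟩, ?_⟩
      rintro w ⟨hwΦ, hwadj⟩
      have he' : x = u2 := he
      have hxF : x ∈ F := by rw [he']; exact humem.2
      have := huniq (w, x) ⟨Finset.mem_product.mpr ⟨hwΦ, hxF⟩, by
        rw [SimpleGraph.boxProd_adj]; exact Or.inl ⟨hwadj, rfl⟩⟩
      exact congrArg Prod.fst this
    · have he' : v = u1 := he
      exact absurd (by rw [he']; exact humem.1 : v ∈ Φ) hvΦ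

/-- The first-coordinate projection of the part of a zero forcing set lying over a fort
of `H` is a zero forcing set of `G`. -/
lemma zfs_image_fst [Fintype V] [Fintype V'] [DecidableEq V] [DecidableEq V']
    {B : Finset (V × V')}
    (hB : IsZeroForcingSet (G □ H) ↑B) {F : Finset V'} (hF : IsFort H F) :
    IsZeroForcingSet G ↑((B.filter (fun p : V × V' => p.2 ∈ F)).image Prod.fst) := by
  apply zfs_of_transversal
  intro Φ hΦ
  obtain ⟨s, hsF, hsB⟩ := zfs_meets_fort hB (isFort_boxProd hΦ hF)
  rw [Finset.mem_coe] at hsB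
  rw [Finset.mem_product] at hsF
  refine ⟨s.1, hsF.1, ?_⟩
  rw [Finset.mem_coe, Finset.mem_image]
  exact ⟨s, Finset.mem_filter.mpr ⟨hsB, hsF.2⟩, rfl⟩

/-- Lemma A : for every fort `F` of `H`, a zero forcing set of `G □ H` has at least
`zfNumber G` elements with second coordinate in `F`. -/
lemma lemmaA [Fintype V] [Fintype V'] [DecidableEq V] [DecidableEq V'] {B : Finset (V × V')}
    (hB : IsZeroForcingSet (G □ H) ↑B) {F : Finset V'} (hF : IsFort H F) :
    zfNumber G ≤ (B.filter (fun p : V × V' => p.2 ∈ F)).card :=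
  le_trans (zfNumber_le_card (zfs_image_fst hB hF)) Finset.card_image_le

end Forts

section CruxAux
variable {V V' : Type*} {G : SimpleGraph V} {H : SimpleGraph V'}

/-- an irredundant zero forcing set cannot contain the closed neighborhood of a
non-isolated vertex. -/
lemma lemmaN [Fintype V] [DecidableEq V] {S : Finset V} (hS : IsZeroForcingSet G ↑S)
    (hirr : ∀ u ∈ S, ¬ IsZeroForcingSet G ↑(S.erase u))
    {v w : V} (hv : v ∈ S) (hw : G.Adj v w) (hN : ∀ x, G.Adj v x → x ∈ S) : False := by
  have hwS : w ∈ S := hN w hw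
  obtain ⟨Φ, hΦ, havoid⟩ := not_zfs_exists_fort (hirr w hwS)
  have havoid' : ∀ s, s ∈ S → s ≠ w → s ∉ Φ := by
    intro s hsS hsw
    exact havoid s (Finset.mem_coe.mpr (Finset.mem_erase.mpr ⟨hsw, hsS⟩))
  obtain ⟨s, hsΦ, hsS⟩ := zfs_meets_fort hS hΦ
  rw [Finset.mem_coe] at hsS
  have hsw : s = w := by
    by_contra hne
    exact havoid' s hsS hne hsΦ
  subst hsw
  have hvw : v ≠ s := G.ne_of_adj hw
  have hvΦ : v ∉ Φ := havoid' v hv hvw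
  refine hΦ.2 v hvΦ ⟨s, ⟨hsΦ, hw⟩, ?_⟩
  rintro y ⟨hyΦ, hyadj⟩
  have hyS : y ∈ S := hN y hyadj
  by_contra hyw
  exact havoid' y hyS hyw hyΦ

/-- extraction of a force all of whose premises are initially filled, inside an
adjacency-closed region. -/
lemma exists_full_force {W : Type*} {Γ : SimpleGraph W} {S : Set W} (R : Set W)
    (hR : ∀ a b, Γ.Adj a b → b ∈ R → a ∈ R) :
    ∀ v, ZFForced Γ S v → v ∈ R → v ∉ S →
      ∃ p q, p ∈ S ∧ q ∈ R ∧ q ∉ S ∧ Γ.Adj p q ∧ ∀ x, Γ.Adj p x → x ≠ q → x ∈ S := by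
  intro v hv
  induction hv with
  | init v h => exact fun _ hvS => absurd h hvS
  | force u w hadj hu hall ihu ihall =>
      intro hwR hwS
      have huR : u ∈ R := hR u w hadj hwR
      by_cases huS : u ∈ S
      · by_cases hAll : ∀ x, Γ.Adj u x → x ≠ w → x ∈ S
        · exact ⟨u, w, huS, hwR, hwS, hadj, hAll⟩
        · push_neg at hAll
          obtain ⟨x, hx, hxw, hxS⟩ := hAll
          exact ihall x hx hxw (hR x u hx.symm huR) hxS
      · exact ihu huR huS

lemma card_image_fst_add_one_le [DecidableEq V] [DecidableEq V'] {s : Finset (V × V')} {p₁ p₂ : V × V'}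
    (h1 : p₁ ∈ s) (h2 : p₂ ∈ s) (hne : p₁ ≠ p₂) (hcol : p₁.1 = p₂.1) :
    (s.image Prod.fst).card + 1 ≤ s.card := by
  have him : s.image Prod.fst = (s.erase p₁).image Prod.fst := by
    apply Finset.Subset.antisymm
    · intro x hx
      obtain ⟨p, hp, rfl⟩ := Finset.mem_image.mp hx
      by_cases hpp : p = p₁
      · refine Finset.mem_image.mpr ⟨p₂, Finset.mem_erase.mpr ⟨fun h => hne h.symm, h2⟩, ?_⟩
        rw [hpp, hcol]
      · exact Finset.mem_image.mpr ⟨p, Finset.mem_erase.mpr ⟨hpp, hp⟩, rfl⟩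
    · exact Finset.image_subset_image (Finset.erase_subset _ _)
  have h3 : (s.image Prod.fst).card ≤ s.card - 1 := by
    rw [him, ← Finset.card_erase_of_mem h1]
    exact Finset.card_image_le
  have h4 : 1 ≤ s.card := Finset.card_pos.mpr ⟨p₁, h1⟩
  omega

lemma zfNumber_add_one_le_card [Fintype V] (hG : ∃ u v, G.Adj u v) :
    zfNumber G + 1 ≤ Fintype.card V := by
  classical
  obtain ⟨u, v, huv⟩ := hG
  have hzfs : IsZeroForcingSet G ↑(univ.erase v) := by
    intro x
    by_cases hx : x = v
    · subst hx
      refine ZFForced.force u x huv (ZFForced.init _ ?_) ?_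
      · exact Finset.mem_coe.mpr (Finset.mem_erase.mpr ⟨G.ne_of_adj huv, Finset.mem_univ u⟩)
      · intro y hy hyx
        exact ZFForced.init _ (Finset.mem_coe.mpr (Finset.mem_erase.mpr ⟨hyx, Finset.mem_univ y⟩))
    · exact ZFForced.init _ (Finset.mem_coe.mpr (Finset.mem_erase.mpr ⟨hx, Finset.mem_univ x⟩))
  have h1 := zfNumber_le_card hzfs
  rw [Finset.card_erase_of_mem (Finset.mem_univ v), Finset.card_univ] at h1
  have h2 : 1 ≤ Fintype.card V := Fintype.card_pos_iff.mpr ⟨v⟩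
  omega

/-- a singleton consisting of an isolated vertex is a fort. -/
lemma isFort_singleton_isolated {h : V'} (hiso : ∀ y, ¬ H.Adj h y) :
    IsFort H ({h} : Finset V') := by
  refine ⟨⟨h, Finset.mem_singleton_self h⟩, ?_⟩
  rintro v hv ⟨u, ⟨hu, hadj⟩, _⟩
  rw [Finset.mem_singleton] at hu
  subst hu
  exact hiso v hadj.symm

end CruxAux

section Counting
variable {V V' : Type*}

lemma card_filter_snd_sum [DecidableEq V'] (B : Finset (V × V')) (F : Finset V') :
    (B.filter (fun p : V × V' => p.2 ∈ F)).card
      = ∑ h ∈ F, (B.filter (fun p : V × V' => p.2 = h)).card := by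
  classical
  rw [Finset.card_eq_sum_card_fiberwise (f := Prod.snd) (s := B.filter (fun p : V × V' => p.2 ∈ F)) (t := F)
    (fun p hp => (Finset.mem_filter.mp hp).2)]
  refine Finset.sum_congr rfl (fun h hh => ?_)
  congr 1
  ext p
  simp only [Finset.mem_filter]
  constructor
  · rintro ⟨⟨hB, _⟩, he⟩; exact ⟨hB, he⟩
  · rintro ⟨hB, he⟩; exact ⟨⟨hB, he ▸ hh⟩, he⟩

lemma card_eq_sum_counts [Fintype V'] [DecidableEq V'] (B : Finset (V × V')) :
    B.card = ∑ h : V', (B.filter (fun p : V × V' => p.2 = h)).card :=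
  Finset.card_eq_sum_card_fiberwise (fun p _ => Finset.mem_univ p.2)

end Counting

section FracZ
variable {V' : Type*} [Fintype V'] {H : SimpleGraph V'}

lemma fracZ_le (ω : V' → ℝ) (h0 : ∀ v, 0 ≤ ω v)
    (hfeas : ∀ F : Finset V', IsFort H F → 1 ≤ ∑ v ∈ F, ω v) :
    fracZ H ≤ ∑ v, ω v := by
  apply csInf_le
  · refine ⟨0, ?_⟩
    rintro x ⟨ω', h0', _, rfl⟩
    exact Finset.sum_nonneg (fun v _ => h0' v)
  · exact ⟨ω, h0, hfeas, rfl⟩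

end FracZ

/-- The key combinatorial fact: some row meets only non-tight forts. -/
lemma crux {V V' : Type*} [Fintype V] [Fintype V'] [DecidableEq V] [DecidableEq V']
    {G : SimpleGraph V} {H : SimpleGraph V'}
    (hG : ∃ u v, G.Adj u v) (hH : ∃ u v, H.Adj u v)
    {B : Finset (V × V')} (hB : IsZeroForcingSet (G □ H) ↑B) :
    ∃ h₀ : V', 1 ≤ (B.filter (fun p : V × V' => p.2 = h₀)).card ∧
      ∀ F : Finset V', IsFort H F → h₀ ∈ F →
        zfNumber G + 1 ≤ (B.filter (fun p : V × V' => p.2 ∈ F)).card := by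
  classical
  by_cases hRfull : ∀ p : V × V', (∃ a, G.Adj p.1 a) → (∃ b, H.Adj p.2 b) → p ∈ B
  · -- Case: B contains all "doubly non-isolated" vertices
    obtain ⟨g₀, g₁, hg⟩ := hG
    obtain ⟨h', h₁', hh⟩ := hH
    have hg0h' : (g₀, h') ∈ B := hRfull (g₀, h') ⟨g₁, hg⟩ ⟨h₁', hh⟩
    refine ⟨h', Finset.card_pos.mpr ⟨(g₀, h'), Finset.mem_filter.mpr ⟨hg0h', rfl⟩⟩, ?_⟩
    intro F hF hmemF
    by_cases hiso : ∃ hᵢ ∈ F, ∀ y, ¬ H.Adj hᵢ y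
    · obtain ⟨hᵢ, hiF, hisol⟩ := hiso
      have hA := lemmaA hB (isFort_singleton_isolated hisol)
      have hne : h' ≠ hᵢ := fun hEq => hisol h₁' (hEq ▸ hh)
      have hsub : insert (g₀, h') (B.filter (fun p : V × V' => p.2 ∈ ({hᵢ} : Finset V')))
          ⊆ B.filter (fun p : V × V' => p.2 ∈ F) := by
        intro x hx
        rcases Finset.mem_insert.mp hx with rfl | hx
        · exact Finset.mem_filter.mpr ⟨hg0h', hmemF⟩
        · obtain ⟨hxB, hx2⟩ := Finset.mem_filter.mp hx
          rw [Finset.mem_singleton] at hx2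
          exact Finset.mem_filter.mpr ⟨hxB, hx2 ▸ hiF⟩
      have hnm : (g₀, h') ∉ B.filter (fun p : V × V' => p.2 ∈ ({hᵢ} : Finset V')) := by
        intro hmem
        obtain ⟨_, h2⟩ := Finset.mem_filter.mp hmem
        rw [Finset.mem_singleton] at h2
        exact hne h2
      have hcc := Finset.card_le_card hsub
      rw [Finset.card_insert_of_notMem hnm] at hcc
      omega
    · push_neg at hiso
      have himg : (univ : Finset V) ⊆ (B.filter (fun p : V × V' => p.2 ∈ F)).image Prod.fst := by
        intro a _
        by_cases haiso : ∃ x, G.Adj a x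
        · exact Finset.mem_image.mpr ⟨(a, h'), Finset.mem_filter.mpr
            ⟨hRfull (a, h') haiso ⟨h₁', hh⟩, hmemF⟩, rfl⟩
        · push_neg at haiso
          have hfortA : IsFort G ({a} : Finset V) :=
            isFort_singleton_isolated (fun y hy => haiso y hy)
          obtain ⟨s, hsF, hsB⟩ := zfs_meets_fort hB (isFort_boxProd hfortA hF)
          rw [Finset.mem_product] at hsF
          have hs1 : s.1 = a := Finset.mem_singleton.mp hsF.1
          exact Finset.mem_image.mpr
            ⟨s, Finset.mem_filter.mpr ⟨Finset.mem_coe.mp hsB, hsF.2⟩, hs1⟩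
      have hc1 := Finset.card_le_card himg
      rw [Finset.card_univ] at hc1
      have hc2 : ((B.filter (fun p : V × V' => p.2 ∈ F)).image Prod.fst).card
          ≤ (B.filter (fun p : V × V' => p.2 ∈ F)).card := Finset.card_image_le
      have hc3 := zfNumber_add_one_le_card ⟨g₀, g₁, hg⟩
      omega
  · push_neg at hRfull
    obtain ⟨p₀, hp₀G, hp₀H, hp₀B⟩ := hRfull
    have hclosed : ∀ a b : V × V', (G □ H).Adj a b →
        b ∈ {p : V × V' | (∃ x, G.Adj p.1 x) ∧ (∃ y, H.Adj p.2 y)} →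
        a ∈ {p : V × V' | (∃ x, G.Adj p.1 x) ∧ (∃ y, H.Adj p.2 y)} := by
      intro a b hab hbR
      obtain ⟨hbG, hbH⟩ := hbR
      rcases SimpleGraph.boxProd_adj.mp hab with ⟨hGadj, he⟩ | ⟨hHadj, he⟩
      · refine ⟨⟨b.1, hGadj⟩, ?_⟩
        rw [show a.2 = b.2 from he]
        exact hbH
      · refine ⟨?_, ⟨b.2, hHadj⟩⟩
        rw [show a.1 = b.1 from he]
        exact hbG
    obtain ⟨p, q, hpB, hqR, hqB, hpq, hprem⟩ :=
      exists_full_force (Γ := G □ H) (S := ↑B)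
        {p : V × V' | (∃ x, G.Adj p.1 x) ∧ (∃ y, H.Adj p.2 y)} hclosed p₀ (hB p₀)
        ⟨hp₀G, hp₀H⟩ (by simpa using hp₀B)
    have hpR : p ∈ {p : V × V' | (∃ x, G.Adj p.1 x) ∧ (∃ y, H.Adj p.2 y)} :=
      hclosed p q hpq hqR
    have hpB' : p ∈ B := Finset.mem_coe.mp hpB
    rcases SimpleGraph.boxProd_adj.mp hpq with ⟨hGadj, he⟩ | ⟨hHadj, he⟩
    · -- horizontal force
      obtain ⟨h₀, hh₀⟩ := hpR.2
      have hPh₀ : (p.1, h₀) ∈ B := by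
        have hadj : (G □ H).Adj p (p.1, h₀) :=
          SimpleGraph.boxProd_adj.mpr (Or.inr ⟨hh₀, rfl⟩)
        have hneq : (p.1, h₀) ≠ q :=
          fun hEq => G.ne_of_adj hGadj (by rw [← hEq])
        exact Finset.mem_coe.mp (hprem _ hadj hneq)
      refine ⟨h₀, Finset.card_pos.mpr ⟨(p.1, h₀), Finset.mem_filter.mpr ⟨hPh₀, rfl⟩⟩, ?_⟩
      intro F hF hh₀F
      have hsecond : ∃ h₁, h₁ ≠ h₀ ∧ h₁ ∈ F ∧ (p.1, h₁) ∈ B := by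
        by_cases hhF : p.2 ∈ F
        · refine ⟨p.2, H.ne_of_adj hh₀, hhF, ?_⟩
          rw [Prod.mk.eta]
          exact hpB'
        · have hcond := hF.2 p.2 hhF
          have hex2 : ∃ y, (y ∈ F ∧ H.Adj p.2 y) ∧ y ≠ h₀ := by
            by_contra hno
            push_neg at hno
            exact hcond ⟨h₀, ⟨hh₀F, hh₀⟩, fun y hy => hno y hy⟩
          obtain ⟨h₁, ⟨h₁F, h₁adj⟩, h₁ne⟩ := hex2
          refine ⟨h₁, h₁ne, h₁F, ?_⟩
          have hadj : (G □ H).Adj p (p.1, h₁) :=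
            SimpleGraph.boxProd_adj.mpr (Or.inr ⟨h₁adj, rfl⟩)
          have hneq : (p.1, h₁) ≠ q :=
            fun hEq => G.ne_of_adj hGadj (by rw [← hEq])
          exact Finset.mem_coe.mp (hprem _ hadj hneq)
      obtain ⟨h₁, hne01, h₁F, h₁B⟩ := hsecond
      have hZ := zfNumber_le_card (zfs_image_fst hB hF)
      have h2col := card_image_fst_add_one_le
        (s := B.filter (fun p : V × V' => p.2 ∈ F)) (p₁ := (p.1, h₀)) (p₂ := (p.1, h₁))
        (Finset.mem_filter.mpr ⟨hPh₀, hh₀F⟩) (Finset.mem_filter.mpr ⟨h₁B, h₁F⟩)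
        (by intro hEq; exact hne01 (congrArg Prod.snd hEq).symm) rfl
      omega
    · -- vertical force
      obtain ⟨g', hg'⟩ := hpR.1
      refine ⟨p.2, Finset.card_pos.mpr ⟨p, Finset.mem_filter.mpr ⟨hpB', rfl⟩⟩, ?_⟩
      intro F hF hh₂F
      by_contra hcon
      push_neg at hcon
      have hzfsS₀ : IsZeroForcingSet G
          ↑((B.filter (fun p : V × V' => p.2 ∈ F)).image Prod.fst) := zfs_image_fst hB hF
      have hZle := zfNumber_le_card hzfsS₀
      have hcardle : ((B.filter (fun p : V × V' => p.2 ∈ F)).image Prod.fst).card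
          ≤ (B.filter (fun p : V × V' => p.2 ∈ F)).card := Finset.card_image_le
      have hirr : ∀ u ∈ (B.filter (fun p : V × V' => p.2 ∈ F)).image Prod.fst,
          ¬ IsZeroForcingSet G
            ↑(((B.filter (fun p : V × V' => p.2 ∈ F)).image Prod.fst).erase u) := by
        intro u hu hzfs'
        have hx := zfNumber_le_card hzfs'
        rw [Finset.card_erase_of_mem hu] at hx
        have h1 : 1 ≤ ((B.filter (fun p : V × V' => p.2 ∈ F)).image Prod.fst).card :=
          Finset.card_pos.mpr ⟨u, hu⟩
        omega
      have hN : ∀ x, G.Adj p.1 x →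
          x ∈ (B.filter (fun p : V × V' => p.2 ∈ F)).image Prod.fst := by
        intro x hx
        have hadj : (G □ H).Adj p (x, p.2) :=
          SimpleGraph.boxProd_adj.mpr (Or.inl ⟨hx, rfl⟩)
        have hneq : (x, p.2) ≠ q :=
          fun hEq => H.ne_of_adj hHadj (by rw [← hEq])
        have hxB : (x, p.2) ∈ B := Finset.mem_coe.mp (hprem _ hadj hneq)
        exact Finset.mem_image.mpr ⟨(x, p.2), Finset.mem_filter.mpr ⟨hxB, hh₂F⟩, rfl⟩
      have hp1 : p.1 ∈ (B.filter (fun p : V × V' => p.2 ∈ F)).image Prod.fst :=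
        Finset.mem_image.mpr ⟨p, Finset.mem_filter.mpr ⟨hpB', hh₂F⟩, rfl⟩
      exact lemmaN hzfsS₀ hirr hp1 hg' hN


/-- if `G` and `G'` each contain an edge and `Z(G') = Z*(G')`, then
`Z(G □ G') ≥ Z(G) · Z(G') + 1`. -/
theorem zfNumber_boxProd_ge_prod_add_one {V V' : Type*} [Fintype V] [Fintype V']
    (G : SimpleGraph V) (G' : SimpleGraph V')
    (hG : ∃ u v, G.Adj u v) (hG' : ∃ u v, G'.Adj u v)
    (heq : (zfNumber G' : ℝ) = fracZ G') :
    zfNumber G * zfNumber G' + 1 ≤ zfNumber (G □ G') := by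
  classical
  obtain ⟨B, hB, hBcard⟩ := exists_min_zfs (G := G □ G')
  have hVne : Nonempty V := ⟨hG.choose⟩
  have hV'ne : Nonempty V' := ⟨hG'.choose⟩
  have hZ1 : 1 ≤ zfNumber G := one_le_zfNumber
  have hZ1R : (0 : ℝ) < (zfNumber G : ℝ) := by exact_mod_cast hZ1
  obtain ⟨h₀, hh₀1, hh₀2⟩ := crux hG hG' hB
  set Z1 : ℝ := (zfNumber G : ℝ) with hZ1def
  set cnt : V' → ℕ := fun h => (B.filter (fun p : V × V' => p.2 = h)).card with hcnt
  set ω : V' → ℝ := fun h => ((cnt h : ℝ) - (if h = h₀ then 1 else 0)) / Z1 with hω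
  have hnn : ∀ v, 0 ≤ ω v := by
    intro v
    apply div_nonneg _ (le_of_lt hZ1R)
    by_cases hv : v = h₀
    · subst hv
      rw [if_pos rfl]
      have : (1 : ℝ) ≤ (cnt v : ℝ) := by exact_mod_cast hh₀1
      linarith
    · rw [if_neg hv, sub_zero]
      positivity
  have hfeas : ∀ F : Finset V', IsFort G' F → 1 ≤ ∑ v ∈ F, ω v := by
    intro F hF
    have hsum : ∑ v ∈ F, ω v
        = (((B.filter (fun p : V × V' => p.2 ∈ F)).card : ℝ)
            - (if h₀ ∈ F then 1 else 0)) / Z1 := by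
      rw [← Finset.sum_div]
      congr 1
      rw [Finset.sum_sub_distrib, Finset.sum_ite_eq' F h₀ (fun _ => (1:ℝ))]
      congr 1
      rw [card_filter_snd_sum]
      push_cast
      rfl
    rw [hsum, le_div_iff₀ hZ1R, one_mul]
    by_cases hmem : h₀ ∈ F
    · have := hh₀2 F hF hmem
      have : ((zfNumber G : ℕ) : ℝ) + 1 ≤ ((B.filter (fun p : V × V' => p.2 ∈ F)).card : ℝ) := by
        exact_mod_cast this
      simp only [if_pos hmem]
      linarith
    · have := lemmaA hB hF
      have : ((zfNumber G : ℕ) : ℝ) ≤ ((B.filter (fun p : V × V' => p.2 ∈ F)).card : ℝ) := by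
        exact_mod_cast this
      simp only [if_neg hmem]
      linarith
  have htotal : ∑ v, ω v = ((B.card : ℝ) - 1) / Z1 := by
    rw [← Finset.sum_div]
    congr 1
    rw [Finset.sum_sub_distrib, Finset.sum_ite_eq' univ h₀ (fun _ => (1:ℝ)),
      if_pos (Finset.mem_univ h₀)]
    congr 1
    rw [card_eq_sum_counts B]
    push_cast
    rfl
  have hfr : fracZ G' ≤ ((B.card : ℝ) - 1) / Z1 := htotal ▸ fracZ_le ω hnn hfeas
  rw [← heq] at hfr
  rw [le_div_iff₀ hZ1R] at hfr
  have : (zfNumber G : ℝ) * (zfNumber G' : ℝ) + 1 ≤ (B.card : ℝ) := by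
    rw [mul_comm]
    linarith
  have : zfNumber G * zfNumber G' + 1 ≤ B.card := by exact_mod_cast this
  omega
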